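/- Let (P,⪯) be a finite poset. Then the set Val^±(P) = {h : P → ℝ | −1 ≤ Σ_{a∈F} h(a) ≤ 1 for every filter F of P} equals the Minkowski difference Val(P) − Val(P) = {h₁ − h₂ : h₁, h₂ ∈ Val(P)}. -/

import Mathlib

set_option linter.unusedSectionVars false
set_option linter.unusedVariables false

open Set Pointwise

/-- The valuation polytope (in reduced coordinates): `h : P → ℝ` such that
`0 ≤ ∑_{a ∈ F} h(a) ≤ 1` for every filter `F` of `(P, le)`. -/
def valPoly (P : Type*) [Fintype P] (le : P → P → Prop) : Set (P → ℝ) :=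
  {h | ∀ F : Finset P, (∀ a ∈ F, ∀ b, le a b → b ∈ F) →
        0 ≤ ∑ a ∈ F, h a ∧ ∑ a ∈ F, h a ≤ 1}

namespace ValPM

variable {P : Type*} [Fintype P] [DecidableEq P]

/-- Up-closed finsets (filters). -/
def UC (le : P → P → Prop) (G : Finset P) : Prop := ∀ a ∈ G, ∀ b, le a b → b ∈ G

/-- `h`-sum over a finset. -/
def HS (h : P → ℝ) (E : Finset P) : ℝ := ∑ a ∈ E, h a

/-- `x`-sum over the part of `E` inside `W`. -/
def XS (x : P → ℝ) (W E : Finset P) : ℝ := ∑ a ∈ E ∩ W, x a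

/-- The invariant. -/
def Inv (le : P → P → Prop) (h x : P → ℝ) (W : Finset P) : Prop :=
  (∀ G, UC le G → G ⊆ W →
     (0 ≤ XS x W G ∧ XS x W G ≤ 1) ∧ (HS h G ≤ XS x W G ∧ XS x W G ≤ 1 + HS h G)) ∧
  (∀ G G', UC le G → UC le G' → G \ W = G' \ W →
     HS h G - XS x W G + XS x W G' ≤ 1 ∧ -1 ≤ HS h G - XS x W G + XS x W G')

section UCLemmas

variable {le : P → P → Prop}

lemma UC.union {G G' : Finset P} (h : UC le G) (h' : UC le G') : UC le (G ∪ G') := by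
  intro a ha b hb
  rcases Finset.mem_union.1 ha with h1 | h1
  · exact Finset.mem_union.2 (Or.inl (h a h1 b hb))
  · exact Finset.mem_union.2 (Or.inr (h' a h1 b hb))

lemma UC.inter {G G' : Finset P} (h : UC le G) (h' : UC le G') : UC le (G ∩ G') := by
  intro a ha b hb
  rcases Finset.mem_inter.1 ha with ⟨h1, h2⟩
  exact Finset.mem_inter.2 ⟨h a h1 b hb, h' a h2 b hb⟩

lemma UC.insert_q {T : Finset P} {q : P} (hT : UC le T)
    (hV : ∀ b, le q b → b ≠ q → b ∈ T) : UC le (insert q T) := by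
  intro a ha b hb
  rcases Finset.mem_insert.1 ha with rfl | h1
  · by_cases hbq : b = a
    · simp [hbq]
    · exact Finset.mem_insert.2 (Or.inr (hV b hb hbq))
  · exact Finset.mem_insert.2 (Or.inr (hT a h1 b hb))

lemma UC.erase_q {G : Finset P} {q : P} (hG : UC le G)
    (hblock : ∀ a ∈ G, a ≠ q → le a q → False) : UC le (G.erase q) := by
  intro a ha b hb
  obtain ⟨haq, haG⟩ := Finset.mem_erase.1 ha
  have hbG : b ∈ G := hG a haG b hb
  refine Finset.mem_erase.2 ⟨?_, hbG⟩
  rintro rfl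
  exact hblock a haG haq hb

/-- erase a `q`-containing filter that has a `q`-free companion with the same part
outside `insert q W`. -/
lemma UC.erase_partner {G G' W : Finset P} {q : P} (hG : UC le G) (hG' : UC le G')
    (hW : UC le W) (hqW : q ∉ W) (hq : q ∈ G) (hq' : q ∉ G')
    (hpart : G \ insert q W = G' \ insert q W) : UC le (G.erase q) := by
  refine hG.erase_q ?_
  intro a haG haq halq
  by_cases haW : a ∈ W
  · exact hqW (hW a haW q halq)
  · have : a ∈ G \ insert q W := by
      simp only [Finset.mem_sdiff, Finset.mem_insert]
      exact ⟨haG, by tauto⟩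
    rw [hpart] at this
    have haG' : a ∈ G' := (Finset.mem_sdiff.1 this).1
    exact hq' (hG' a haG' q halq)

end UCLemmas

section SumLemmas

variable {q : P} {W : Finset P} (x h : P → ℝ)

lemma HS_union_inter (A B : Finset P) :
    HS h (A ∪ B) + HS h (A ∩ B) = HS h A + HS h B := Finset.sum_union_inter

lemma XS_union_inter (A B : Finset P) :
    XS x W (A ∪ B) + XS x W (A ∩ B) = XS x W A + XS x W B := by
  unfold XS
  rw [Finset.union_inter_distrib_right]
  have : A ∩ B ∩ W = (A ∩ W) ∩ (B ∩ W) := by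
    ext a; simp only [Finset.mem_inter]; tauto
  rw [this]
  exact Finset.sum_union_inter

lemma XS_insert_q (hqW : q ∉ W) (E : Finset P) : XS x W (insert q E) = XS x W E := by
  unfold XS
  congr 1
  ext a
  simp only [Finset.mem_inter, Finset.mem_insert]
  constructor
  · rintro ⟨rfl | ha, haW⟩
    · exact absurd haW hqW
    · exact ⟨ha, haW⟩
  · rintro ⟨ha, haW⟩; exact ⟨Or.inr ha, haW⟩

lemma XS_erase_q (hqW : q ∉ W) (E : Finset P) : XS x W (E.erase q) = XS x W E := by
  unfold XS
  congr 1
  ext a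
  simp only [Finset.mem_inter, Finset.mem_erase]
  constructor
  · rintro ⟨⟨_, ha⟩, haW⟩; exact ⟨ha, haW⟩
  · rintro ⟨ha, haW⟩
    refine ⟨⟨?_, ha⟩, haW⟩
    rintro rfl; exact hqW haW

lemma XS_of_subset {E : Finset P} (hE : E ⊆ W) : XS x W E = ∑ a ∈ E, x a := by
  unfold XS
  congr 1
  exact Finset.inter_eq_left.2 hE

lemma HS_erase_q {G : Finset P} (hq : q ∈ G) :
    HS h G = h q + HS h (G.erase q) := (Finset.add_sum_erase G h hq).symm

lemma HS_insert_q {T : Finset P} (hq : q ∉ T) :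
    HS h (insert q T) = h q + HS h T := Finset.sum_insert hq

lemma XS_update (hqW : q ∉ W) (t : ℝ) (E : Finset P) :
    XS (Function.update x q t) W E = XS x W E := by
  unfold XS
  refine Finset.sum_congr rfl fun a ha => ?_
  have : a ≠ q := by
    rintro rfl
    exact hqW (Finset.mem_inter.1 ha).2
  exact Function.update_of_ne this _ _

/-- the new `XS` over `insert q W` for `q ∈ G`. -/
lemma XS_new_mem (hqW : q ∉ W) (t : ℝ) {G : Finset P} (hq : q ∈ G) :
    XS (Function.update x q t) (insert q W) G = t + XS x W G := by
  unfold XS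
  have h1 : G ∩ insert q W = insert q (G ∩ W) := by
    ext a
    simp only [Finset.mem_inter, Finset.mem_insert]
    constructor
    · rintro ⟨haG, rfl | haW⟩
      · exact Or.inl rfl
      · exact Or.inr ⟨haG, haW⟩
    · rintro (rfl | ⟨haG, haW⟩)
      · exact ⟨hq, Or.inl rfl⟩
      · exact ⟨haG, Or.inr haW⟩
  rw [h1, Finset.sum_insert (by simp [hqW])]
  rw [Function.update_self]
  congr 1
  refine Finset.sum_congr rfl fun a ha => ?_
  have : a ≠ q := by
    rintro rfl
    exact hqW (Finset.mem_inter.1 ha).2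
  exact Function.update_of_ne this _ _

/-- the new `XS` over `insert q W` for `q ∉ G`. -/
lemma XS_new_notmem (hqW : q ∉ W) (t : ℝ) {G : Finset P} (hq : q ∉ G) :
    XS (Function.update x q t) (insert q W) G = XS x W G := by
  unfold XS
  have h1 : G ∩ insert q W = G ∩ W := by
    ext a
    simp only [Finset.mem_inter, Finset.mem_insert]
    constructor
    · rintro ⟨haG, rfl | haW⟩
      · exact absurd haG hq
      · exact ⟨haG, haW⟩
    · rintro ⟨haG, haW⟩; exact ⟨haG, Or.inr haW⟩
  rw [h1]
  refine Finset.sum_congr rfl fun a ha => ?_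
  have : a ≠ q := by
    rintro rfl
    exact hqW (Finset.mem_inter.1 ha).2
  exact Function.update_of_ne this _ _

end SumLemmas

section SdiffLemmas

variable {q : P} {W : Finset P}

lemma sdiff_insert_of_notmem {G : Finset P} (hq : q ∉ G) :
    G \ insert q W = G \ W := by
  ext a
  simp only [Finset.mem_sdiff, Finset.mem_insert]
  constructor
  · rintro ⟨ha, h2⟩; exact ⟨ha, fun hw => h2 (Or.inr hw)⟩
  · rintro ⟨ha, h2⟩
    refine ⟨ha, ?_⟩
    rintro (rfl | hw)
    · exact hq ha
    · exact h2 hw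

lemma sdiff_of_mem (hqW : q ∉ W) {G : Finset P} (hq : q ∈ G) :
    G \ W = insert q (G \ insert q W) := by
  ext a
  simp only [Finset.mem_sdiff, Finset.mem_insert]
  constructor
  · rintro ⟨ha, h2⟩
    by_cases haq : a = q
    · exact Or.inl haq
    · exact Or.inr ⟨ha, by tauto⟩
  · rintro (rfl | ⟨ha, h2⟩)
    · exact ⟨hq, hqW⟩
    · exact ⟨ha, fun hw => h2 (Or.inr hw)⟩

lemma erase_sdiff_eq {G : Finset P} :
    (G.erase q) \ W = G \ insert q W := by
  ext a
  simp only [Finset.mem_sdiff, Finset.mem_erase, Finset.mem_insert]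
  tauto

end SdiffLemmas


section PartLemmas

variable {q : P} {W : Finset P}

lemma mem_iff_of_part {A B : Finset P} (hpart : A \ insert q W = B \ insert q W) :
    ∀ a, a ≠ q → a ∉ W → (a ∈ A ↔ a ∈ B) := by
  intro a haq haW
  have := Finset.ext_iff.1 hpart a
  simp only [Finset.mem_sdiff, Finset.mem_insert] at this
  constructor
  · intro haA
    exact ((this.1 ⟨haA, by tauto⟩).1)
  · intro haB
    exact ((this.2 ⟨haB, by tauto⟩).1)

lemma part_eq_of {A B : Finset P} (hiff : ∀ a, a ≠ q → a ∉ W → (a ∈ A ↔ a ∈ B))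
    (hqmem : (q ∈ A) ↔ (q ∈ B)) : A \ W = B \ W := by
  ext a
  simp only [Finset.mem_sdiff]
  by_cases haq : a = q
  · subst haq; tauto
  · constructor
    · rintro ⟨ha, hw⟩; exact ⟨(hiff a haq hw).1 ha, hw⟩
    · rintro ⟨ha, hw⟩; exact ⟨(hiff a haq hw).2 ha, hw⟩

lemma insert_sdiff_of_subset (hqW : q ∉ W) {T : Finset P} (hTW : T ⊆ W) :
    (insert q T) \ W = {q} := by
  ext a
  simp only [Finset.mem_sdiff, Finset.mem_insert, Finset.mem_singleton]
  constructor
  · rintro ⟨rfl | haT, hw⟩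
    · rfl
    · exact absurd (hTW haT) hw
  · rintro rfl; exact ⟨Or.inl rfl, hqW⟩

lemma inter_insert_of_notmem {A B : Finset P} (hq : q ∉ A) :
    A ∩ insert q B = A ∩ B := by
  ext a
  simp only [Finset.mem_inter, Finset.mem_insert]
  constructor
  · rintro ⟨ha, rfl | hb⟩
    · exact absurd ha hq
    · exact ⟨ha, hb⟩
  · rintro ⟨ha, hb⟩; exact ⟨ha, Or.inr hb⟩

end PartLemmas

section Step

variable (le : P → P → Prop) (h x : P → ℝ) (W : Finset P) (q : P)

/-- The set of lower bounds for the new value at `q`. -/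
def Low : Set ℝ :=
  {r | (∃ T : Finset P, UC le T ∧ T ⊆ W ∧ (∀ b, le q b → b ≠ q → b ∈ T) ∧
          (r = -XS x W T ∨ r = HS h (insert q T) - XS x W T)) ∨
       (∃ G₁ G₂ : Finset P, UC le G₁ ∧ UC le G₂ ∧ q ∈ G₁ ∧ q ∉ G₂ ∧
          G₁ \ insert q W = G₂ \ insert q W ∧
          (r = HS h G₁ - XS x W G₁ + XS x W G₂ - 1 ∨
           r = -HS h G₂ - XS x W G₁ + XS x W G₂ - 1))}

variable {le h x W q}

/-- `G₂ \ W = (G₁.erase q) \ W` for partners. -/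
lemma part_erase (hqG₂ : q ∉ G₂) (hpart : G₁ \ insert q W = G₂ \ insert q W) :
    G₂ \ W = (G₁.erase q) \ W := by
  rw [erase_sdiff_eq, hpart]
  exact (sdiff_insert_of_notmem hqG₂).symm

/-- `G₁ \ W = (G₂ ∪ insert q Tb) \ W` for partners and `Tb ⊆ W`. -/
lemma part_union_insert (hqW : q ∉ W) {G₁ G₂ Tb : Finset P} (hqG₁ : q ∈ G₁) (hqG₂ : q ∉ G₂)
    (hpart : G₁ \ insert q W = G₂ \ insert q W) (hTbW : Tb ⊆ W) :
    G₁ \ W = (G₂ ∪ insert q Tb) \ W := by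
  have hiff := mem_iff_of_part hpart
  ext a
  simp only [Finset.mem_sdiff, Finset.mem_union, Finset.mem_insert]
  constructor
  · rintro ⟨haG₁, haW⟩
    by_cases haq : a = q
    · exact ⟨Or.inr (Or.inl haq), haW⟩
    · exact ⟨Or.inl ((hiff a haq haW).1 haG₁), haW⟩
  · rintro ⟨hmem, haW⟩
    refine ⟨?_, haW⟩
    rcases hmem with haG₂ | rfl | haTb
    · have haq : a ≠ q := by rintro rfl; exact hqG₂ haG₂
      exact (hiff a haq haW).2 haG₂
    · exact hqG₁
    · exact absurd (hTbW haTb) haW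

lemma low_le_U1 (hW : UC le W) (hqW : q ∉ W) (inv : Inv le h x W)
    {Tb : Finset P} (hTb : UC le Tb) (hTbW : Tb ⊆ W)
    (hVb : ∀ b, le q b → b ≠ q → b ∈ Tb) :
    ∀ r ∈ Low le h x W q, r ≤ 1 - XS x W Tb := by
  rintro r (⟨T, hT, hTW, hVT, (rfl | rfl)⟩ | ⟨G₁, G₂, hG₁, hG₂, hqG₁, hqG₂, hpart, (rfl | rfl)⟩)
  · -- L1 ≤ U1
    have h1 := (inv.1 T hT hTW).1.1
    have h2 := (inv.1 Tb hTb hTbW).1.2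
    linarith
  · -- L2 ≤ U1
    have hpart2 : (insert q T) \ W = (insert q Tb) \ W := by
      rw [insert_sdiff_of_subset hqW hTW, insert_sdiff_of_subset hqW hTbW]
    have hB := (inv.2 (insert q T) (insert q Tb) (hT.insert_q hVT) (hTb.insert_q hVb) hpart2).1
    rw [XS_insert_q x hqW T, XS_insert_q x hqW Tb] at hB
    linarith
  · -- L3 ≤ U1
    have hUCub : UC le (G₂ ∪ insert q Tb) := hG₂.union (hTb.insert_q hVb)
    have hpart3 : G₁ \ W = (G₂ ∪ insert q Tb) \ W :=
      part_union_insert hqW hqG₁ hqG₂ hpart hTbW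
    have hB := (inv.2 G₁ (G₂ ∪ insert q Tb) hG₁ hUCub hpart3).1
    have hXm := XS_union_inter x (W := W) G₂ (insert q Tb)
    rw [XS_insert_q x hqW Tb, inter_insert_of_notmem hqG₂] at hXm
    have hA := (inv.1 (G₂ ∩ Tb) (hG₂.inter hTb)
      ((Finset.inter_subset_right).trans hTbW)).1.2
    linarith
  · -- L4 ≤ U1
    have hUCe : UC le (G₁.erase q) :=
      hG₁.erase_partner hG₂ hW hqW hqG₁ hqG₂ hpart
    have hB := (inv.2 G₂ (G₁.erase q) hG₂ hUCe (part_erase hqG₂ hpart)).2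
    rw [XS_erase_q x hqW G₁] at hB
    have h2 := (inv.1 Tb hTb hTbW).1.2
    linarith

lemma low_le_U2 (hW : UC le W) (hqW : q ∉ W) (inv : Inv le h x W)
    {Tb : Finset P} (hTb : UC le Tb) (hTbW : Tb ⊆ W)
    (hVb : ∀ b, le q b → b ≠ q → b ∈ Tb) :
    ∀ r ∈ Low le h x W q, r ≤ 1 + HS h (insert q Tb) - XS x W Tb := by
  rintro r (⟨T, hT, hTW, hVT, (rfl | rfl)⟩ | ⟨G₁, G₂, hG₁, hG₂, hqG₁, hqG₂, hpart, (rfl | rfl)⟩)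
  · -- L1 ≤ U2
    have hpart2 : (insert q Tb) \ W = (insert q T) \ W := by
      rw [insert_sdiff_of_subset hqW hTW, insert_sdiff_of_subset hqW hTbW]
    have hB := (inv.2 (insert q Tb) (insert q T) (hTb.insert_q hVb) (hT.insert_q hVT) hpart2).2
    rw [XS_insert_q x hqW T, XS_insert_q x hqW Tb] at hB
    linarith
  · -- L2 ≤ U2
    have h1 := (inv.1 T hT hTW).2.1
    have h2 := (inv.1 Tb hTb hTbW).2.2
    have e1 : HS h (insert q T) = h q + HS h T := HS_insert_q h (fun hc => hqW (hTW hc))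
    have e2 : HS h (insert q Tb) = h q + HS h Tb := HS_insert_q h (fun hc => hqW (hTbW hc))
    have e3 : XS x W T = ∑ a ∈ T, x a := XS_of_subset x hTW
    have e4 : XS x W Tb = ∑ a ∈ Tb, x a := XS_of_subset x hTbW
    rw [e3] at h1 ⊢
    rw [e4] at h2 ⊢
    linarith
  · -- L3 ≤ U2
    have hUCe : UC le (G₁.erase q) :=
      hG₁.erase_partner hG₂ hW hqW hqG₁ hqG₂ hpart
    have hpart3 : (G₁.erase q) \ W = G₂ \ W := (part_erase hqG₂ hpart).symm
    have hB := (inv.2 (G₁.erase q) G₂ hUCe hG₂ hpart3).1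
    rw [XS_erase_q x hqW G₁] at hB
    have e1 : HS h G₁ = h q + HS h (G₁.erase q) := HS_erase_q h hqG₁
    have e2 : HS h (insert q Tb) = h q + HS h Tb := HS_insert_q h (fun hc => hqW (hTbW hc))
    have h2 := (inv.1 Tb hTb hTbW).2.2
    linarith
  · -- L4 ≤ U2
    have hUCub : UC le (G₂ ∪ insert q Tb) := hG₂.union (hTb.insert_q hVb)
    have hpart4 : (G₂ ∪ insert q Tb) \ W = G₁ \ W :=
      (part_union_insert hqW hqG₁ hqG₂ hpart hTbW).symm
    have hB := (inv.2 (G₂ ∪ insert q Tb) G₁ hUCub hG₁ hpart4).2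
    have hXm := XS_union_inter x (W := W) G₂ (insert q Tb)
    have hHm := HS_union_inter h G₂ (insert q Tb)
    rw [XS_insert_q x hqW Tb, inter_insert_of_notmem hqG₂] at hXm
    rw [inter_insert_of_notmem hqG₂] at hHm
    have hA := (inv.1 (G₂ ∩ Tb) (hG₂.inter hTb)
      ((Finset.inter_subset_right).trans hTbW)).2.2
    linarith

lemma low_le_U3 (hW : UC le W) (hqW : q ∉ W) (inv : Inv le h x W)
    {Ga Gb : Finset P} (hGa : UC le Ga) (hGb : UC le Gb)
    (hqGa : q ∉ Ga) (hqGb : q ∈ Gb) (hpartU : Ga \ insert q W = Gb \ insert q W) :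
    ∀ r ∈ Low le h x W q, r ≤ 1 - HS h Ga + XS x W Ga - XS x W Gb := by
  have hUCeb : UC le (Gb.erase q) :=
    hGb.erase_partner hGa hW hqW hqGb hqGa hpartU.symm
  rintro r (⟨T, hT, hTW, hVT, (rfl | rfl)⟩ | ⟨G₁, G₂, hG₁, hG₂, hqG₁, hqG₂, hpart, (rfl | rfl)⟩)
  · -- L1 ≤ U3
    have hB := (inv.2 Ga (Gb.erase q) hGa hUCeb (part_erase hqGa hpartU.symm)).1
    rw [XS_erase_q x hqW Gb] at hB
    have h1 := (inv.1 T hT hTW).1.1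
    linarith
  · -- L2 ≤ U3
    have hUCua : UC le (Ga ∪ insert q T) := hGa.union (hT.insert_q hVT)
    have hpart2 : (Ga ∪ insert q T) \ W = Gb \ W :=
      (part_union_insert hqW hqGb hqGa hpartU.symm hTW).symm
    have hB := (inv.2 (Ga ∪ insert q T) Gb hUCua hGb hpart2).1
    have hXm := XS_union_inter x (W := W) Ga (insert q T)
    have hHm := HS_union_inter h Ga (insert q T)
    rw [XS_insert_q x hqW T, inter_insert_of_notmem hqGa] at hXm
    rw [inter_insert_of_notmem hqGa] at hHm
    have hA := (inv.1 (Ga ∩ T) (hGa.inter hT)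
      ((Finset.inter_subset_right).trans hTW)).2.1
    linarith
  · -- L3 ≤ U3
    have hiff1 := mem_iff_of_part hpart
    have hiffU := mem_iff_of_part hpartU
    have hpi : (G₁ ∩ Ga) \ W = (G₂ ∩ Gb) \ W := by
      refine part_eq_of (q := q) ?_ ?_
      · intro a haq haW
        simp only [Finset.mem_inter]
        rw [hiff1 a haq haW, hiffU a haq haW]
      · simp only [Finset.mem_inter]
        constructor
        · rintro ⟨_, hc⟩; exact absurd hc hqGa
        · rintro ⟨hc, _⟩; exact absurd hc hqG₂
    have hpu : (G₁ ∪ Ga) \ W = (G₂ ∪ Gb) \ W := by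
      refine part_eq_of (q := q) ?_ ?_
      · intro a haq haW
        simp only [Finset.mem_union]
        rw [hiff1 a haq haW, hiffU a haq haW]
      · simp only [Finset.mem_union]
        constructor
        · intro _; exact Or.inr hqGb
        · intro _; exact Or.inl hqG₁
    have hB1 := (inv.2 (G₁ ∩ Ga) (G₂ ∩ Gb) (hG₁.inter hGa) (hG₂.inter hGb) hpi).1
    have hB2 := (inv.2 (G₁ ∪ Ga) (G₂ ∪ Gb) (hG₁.union hGa) (hG₂.union hGb) hpu).1
    have hX1 := XS_union_inter x (W := W) G₁ Ga
    have hX2 := XS_union_inter x (W := W) G₂ Gb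
    have hH1 := HS_union_inter h G₁ Ga
    linarith
  · -- L4 ≤ U3
    have hUCe : UC le (G₁.erase q) :=
      hG₁.erase_partner hG₂ hW hqW hqG₁ hqG₂ hpart
    have hB1 := (inv.2 G₂ (G₁.erase q) hG₂ hUCe (part_erase hqG₂ hpart)).2
    rw [XS_erase_q x hqW G₁] at hB1
    have hB2 := (inv.2 Ga (Gb.erase q) hGa hUCeb (part_erase hqGa hpartU.symm)).1
    rw [XS_erase_q x hqW Gb] at hB2
    linarith

lemma low_le_U4 (hW : UC le W) (hqW : q ∉ W) (inv : Inv le h x W)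
    {Ga Gb : Finset P} (hGa : UC le Ga) (hGb : UC le Gb)
    (hqGa : q ∉ Ga) (hqGb : q ∈ Gb) (hpartU : Ga \ insert q W = Gb \ insert q W) :
    ∀ r ∈ Low le h x W q, r ≤ 1 + HS h Gb + XS x W Ga - XS x W Gb := by
  have hUCeb : UC le (Gb.erase q) :=
    hGb.erase_partner hGa hW hqW hqGb hqGa hpartU.symm
  rintro r (⟨T, hT, hTW, hVT, (rfl | rfl)⟩ | ⟨G₁, G₂, hG₁, hG₂, hqG₁, hqG₂, hpart, (rfl | rfl)⟩)
  · -- L1 ≤ U4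
    have hUCut : UC le (Ga ∪ insert q T) := hGa.union (hT.insert_q hVT)
    have hpart1 : Gb \ W = (Ga ∪ insert q T) \ W :=
      part_union_insert hqW hqGb hqGa hpartU.symm hTW
    have hB := (inv.2 Gb (Ga ∪ insert q T) hGb hUCut hpart1).2
    have hXm := XS_union_inter x (W := W) Ga (insert q T)
    rw [XS_insert_q x hqW T, inter_insert_of_notmem hqGa] at hXm
    have hA := (inv.1 (Ga ∩ T) (hGa.inter hT)
      ((Finset.inter_subset_right).trans hTW)).1.1
    linarith
  · -- L2 ≤ U4
    have hB := (inv.2 (Gb.erase q) Ga hUCeb hGa (part_erase hqGa hpartU.symm).symm).2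
    rw [XS_erase_q x hqW Gb] at hB
    have hA := (inv.1 T hT hTW).2.1
    have e1 : HS h (insert q T) = h q + HS h T := HS_insert_q h (fun hc => hqW (hTW hc))
    have e2 : HS h Gb = h q + HS h (Gb.erase q) := HS_erase_q h hqGb
    linarith
  · -- L3 ≤ U4
    have hUCe : UC le (G₁.erase q) :=
      hG₁.erase_partner hG₂ hW hqW hqG₁ hqG₂ hpart
    have hB1 := (inv.2 (G₁.erase q) G₂ hUCe hG₂ (part_erase hqG₂ hpart).symm).1
    rw [XS_erase_q x hqW G₁] at hB1
    have hB2 := (inv.2 (Gb.erase q) Ga hUCeb hGa (part_erase hqGa hpartU.symm).symm).2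
    rw [XS_erase_q x hqW Gb] at hB2
    have e1 : HS h G₁ = h q + HS h (G₁.erase q) := HS_erase_q h hqG₁
    have e2 : HS h Gb = h q + HS h (Gb.erase q) := HS_erase_q h hqGb
    linarith
  · -- L4 ≤ U4
    have hiff1 := mem_iff_of_part hpart
    have hiffU := mem_iff_of_part hpartU
    have hpi : (G₂ ∩ Gb) \ W = (G₁ ∩ Ga) \ W := by
      refine part_eq_of (q := q) ?_ ?_
      · intro a haq haW
        simp only [Finset.mem_inter]
        rw [hiff1 a haq haW, hiffU a haq haW]
      · simp only [Finset.mem_inter]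
        constructor
        · rintro ⟨hc, _⟩; exact absurd hc hqG₂
        · rintro ⟨_, hc⟩; exact absurd hc hqGa
    have hpu : (G₂ ∪ Gb) \ W = (G₁ ∪ Ga) \ W := by
      refine part_eq_of (q := q) ?_ ?_
      · intro a haq haW
        simp only [Finset.mem_union]
        rw [hiff1 a haq haW, hiffU a haq haW]
      · simp only [Finset.mem_union]
        constructor
        · intro _; exact Or.inl hqG₁
        · intro _; exact Or.inr hqGb
    have hB1 := (inv.2 (G₂ ∩ Gb) (G₁ ∩ Ga) (hG₂.inter hGb) (hG₁.inter hGa) hpi).2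
    have hB2 := (inv.2 (G₂ ∪ Gb) (G₁ ∪ Ga) (hG₂.union hGb) (hG₁.union hGa) hpu).2
    have hX1 := XS_union_inter x (W := W) G₁ Ga
    have hX2 := XS_union_inter x (W := W) G₂ Gb
    have hH2 := HS_union_inter h G₂ Gb
    linarith

end Step


section StepMain

variable {le : P → P → Prop} {h x : P → ℝ} {W : Finset P} {q : P}

lemma XS_univ (x : P → ℝ) (G : Finset P) : XS x Finset.univ G = ∑ a ∈ G, x a := by
  unfold XS; rw [Finset.inter_univ]

lemma step (hW : UC le W) (hqW : q ∉ W) (hmax : ∀ b, le q b → b = q ∨ b ∈ W)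
    (inv : Inv le h x W) :
    ∃ t : ℝ, Inv le h (Function.update x q t) (insert q W) := by
  have hVW : ∀ b, le q b → b ≠ q → b ∈ W := fun b hb hbq => (hmax b hb).resolve_left hbq
  have hmemW : (-XS x W W) ∈ Low le h x W q := Or.inl ⟨W, hW, subset_rfl, hVW, Or.inl rfl⟩
  have hne : (Low le h x W q).Nonempty := ⟨_, hmemW⟩
  have hbdd : BddAbove (Low le h x W q) :=
    ⟨1 - XS x W W, fun r hr => low_le_U1 hW hqW inv hW subset_rfl hVW r hr⟩
  set t := sSup (Low le h x W q) with ht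
  have hlow : ∀ r ∈ Low le h x W q, r ≤ t := fun r hr => le_csSup hbdd hr
  refine ⟨t, ?_, ?_⟩
  · -- part (A)
    intro G hG hGW'
    by_cases hqG : q ∈ G
    · have hTW : G.erase q ⊆ W := by
        intro a ha
        obtain ⟨haq, haG⟩ := Finset.mem_erase.1 ha
        rcases Finset.mem_insert.1 (hGW' haG) with rfl | hw
        · exact absurd rfl haq
        · exact hw
      have hUCT : UC le (G.erase q) := by
        refine hG.erase_q ?_
        intro a haG haq halq
        have haW : a ∈ W := by
          rcases Finset.mem_insert.1 (hGW' haG) with rfl | hw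
          · exact absurd rfl haq
          · exact hw
        exact hqW (hW a haW q halq)
      have hVT : ∀ b, le q b → b ≠ q → b ∈ G.erase q :=
        fun b hb hbq => Finset.mem_erase.2 ⟨hbq, hG q hqG b hb⟩
      have eX : XS x W (G.erase q) = XS x W G := XS_erase_q x hqW G
      have eH : HS h (insert q (G.erase q)) = HS h G := by rw [Finset.insert_erase hqG]
      have hXnew : XS (Function.update x q t) (insert q W) G = t + XS x W G :=
        XS_new_mem x hqW t hqG
      have hlow1 : -XS x W G ≤ t := by
        have := hlow _ (Or.inl ⟨G.erase q, hUCT, hTW, hVT, Or.inl rfl⟩)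
        rwa [eX] at this
      have hlow2 : HS h G - XS x W G ≤ t := by
        have := hlow _ (Or.inl ⟨G.erase q, hUCT, hTW, hVT, Or.inr rfl⟩)
        rwa [eX, eH] at this
      have hup1 : t ≤ 1 - XS x W G := by
        have := csSup_le hne (low_le_U1 hW hqW inv hUCT hTW hVT)
        rwa [eX] at this
      have hup2 : t ≤ 1 + HS h G - XS x W G := by
        have := csSup_le hne (low_le_U2 hW hqW inv hUCT hTW hVT)
        rwa [eX, eH] at this
      rw [hXnew]
      refine ⟨⟨by linarith, by linarith⟩, by linarith, by linarith⟩
    · have hGW : G ⊆ W := by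
        intro a ha
        rcases Finset.mem_insert.1 (hGW' ha) with rfl | hw
        · exact absurd ha hqG
        · exact hw
      have hXnew : XS (Function.update x q t) (insert q W) G = XS x W G :=
        XS_new_notmem x hqW t hqG
      rw [hXnew]
      exact inv.1 G hG hGW
  · -- part (BC)
    intro G G' hG hG' hpart'
    by_cases h1 : q ∈ G <;> by_cases h2 : q ∈ G'
    · -- q in both
      have hXG : XS (Function.update x q t) (insert q W) G = t + XS x W G :=
        XS_new_mem x hqW t h1
      have hXG' : XS (Function.update x q t) (insert q W) G' = t + XS x W G' :=
        XS_new_mem x hqW t h2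
      have hpartW : G \ W = G' \ W := by
        rw [sdiff_of_mem hqW h1, sdiff_of_mem hqW h2, hpart']
      have := inv.2 G G' hG hG' hpartW
      rw [hXG, hXG']
      constructor <;> linarith [this.1, this.2]
    · -- q ∈ G only
      have hXG : XS (Function.update x q t) (insert q W) G = t + XS x W G :=
        XS_new_mem x hqW t h1
      have hXG' : XS (Function.update x q t) (insert q W) G' = XS x W G' :=
        XS_new_notmem x hqW t h2
      have hlow3 : HS h G - XS x W G + XS x W G' - 1 ≤ t :=
        hlow _ (Or.inr ⟨G, G', hG, hG', h1, h2, hpart', Or.inl rfl⟩)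
      have hup4 : t ≤ 1 + HS h G + XS x W G' - XS x W G :=
        csSup_le hne (low_le_U4 hW hqW inv hG' hG h2 h1 hpart'.symm)
      rw [hXG, hXG']
      constructor <;> linarith
    · -- q ∈ G' only
      have hXG : XS (Function.update x q t) (insert q W) G = XS x W G :=
        XS_new_notmem x hqW t h1
      have hXG' : XS (Function.update x q t) (insert q W) G' = t + XS x W G' :=
        XS_new_mem x hqW t h2
      have hlow4 : -HS h G - XS x W G' + XS x W G - 1 ≤ t :=
        hlow _ (Or.inr ⟨G', G, hG', hG, h2, h1, hpart'.symm, Or.inr rfl⟩)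
      have hup3 : t ≤ 1 - HS h G + XS x W G - XS x W G' :=
        csSup_le hne (low_le_U3 hW hqW inv hG hG' h1 h2 hpart')
      rw [hXG, hXG']
      constructor <;> linarith
    · -- q in neither
      have hXG : XS (Function.update x q t) (insert q W) G = XS x W G :=
        XS_new_notmem x hqW t h1
      have hXG' : XS (Function.update x q t) (insert q W) G' = XS x W G' :=
        XS_new_notmem x hqW t h2
      have hpartW : G \ W = G' \ W := by
        rw [← sdiff_insert_of_notmem h1, ← sdiff_insert_of_notmem h2]
        · exact hpart'
      rw [hXG, hXG']
      exact inv.2 G G' hG hG' hpartW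

lemma exists_max (htrans : Transitive le) (hanti : AntiSymmetric le) :
    ∀ (n : ℕ) (S : Finset P), S.card ≤ n → S.Nonempty →
      ∃ q ∈ S, ∀ b ∈ S, le q b → b = q := by
  classical
  intro n
  induction n with
  | zero =>
    intro S hcard hne
    obtain ⟨a, ha⟩ := hne
    have := Finset.card_pos.2 ⟨a, ha⟩
    omega
  | succ n ih =>
    intro S hcard hne
    obtain ⟨a, ha⟩ := hne
    set S' := S.filter (fun b => le a b ∧ b ≠ a) with hS'def
    by_cases hS' : S'.Nonempty
    · have hsub : S' ⊆ S.erase a := by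
        intro b hb
        obtain ⟨hbS, _, hba⟩ := Finset.mem_filter.1 hb
        exact Finset.mem_erase.2 ⟨hba, hbS⟩
      have hcard' : S'.card ≤ n := by
        have h1 := Finset.card_le_card hsub
        have h2 := Finset.card_erase_of_mem ha
        omega
      obtain ⟨q, hqS', hqmax⟩ := ih S' hcard' hS'
      obtain ⟨hqS, haq, hqa⟩ := Finset.mem_filter.1 hqS'
      refine ⟨q, hqS, ?_⟩
      intro b hbS hlqb
      by_cases hba : b = a
      · subst hba
        exact hanti haq hlqb
      · exact hqmax b (Finset.mem_filter.2 ⟨hbS, htrans haq hlqb, hba⟩) hlqb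
    · refine ⟨a, ha, ?_⟩
      intro b hb hab
      by_contra hne'
      exact hS' ⟨b, Finset.mem_filter.2 ⟨hb, hab, hne'⟩⟩

lemma build (htrans : Transitive le) (hanti : AntiSymmetric le) :
    ∀ (n : ℕ) (W : Finset P) (x : P → ℝ), UC le W → (Finset.univ \ W).card ≤ n →
      Inv le h x W → ∃ y : P → ℝ, Inv le h y Finset.univ := by
  intro n
  induction n with
  | zero =>
    intro W x hW hcard inv
    have hW' : W = Finset.univ := by
      have : Finset.univ \ W = ∅ := Finset.card_eq_zero.1 (Nat.le_zero.1 hcard)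
      have hsub : (Finset.univ : Finset P) ⊆ W := by
        rwa [← Finset.sdiff_eq_empty_iff_subset]
      exact (Finset.univ_subset_iff.1 hsub).symm ▸ rfl
    exact ⟨x, hW' ▸ inv⟩
  | succ n ih =>
    intro W x hW hcard inv
    by_cases hWu : W = Finset.univ
    · exact ⟨x, hWu ▸ inv⟩
    · have hSne : (Finset.univ \ W).Nonempty := by
        rw [Finset.sdiff_nonempty]
        intro hsub
        exact hWu (Finset.univ_subset_iff.1 hsub)
      obtain ⟨q, hqS, hqmax⟩ :=
        exists_max htrans hanti (Finset.univ \ W).card (Finset.univ \ W) le_rfl hSne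
      have hqW : q ∉ W := (Finset.mem_sdiff.1 hqS).2
      have hmax : ∀ b, le q b → b = q ∨ b ∈ W := by
        intro b hb
        by_cases hbW : b ∈ W
        · exact Or.inr hbW
        · exact Or.inl (hqmax b (Finset.mem_sdiff.2 ⟨Finset.mem_univ b, hbW⟩) hb)
      obtain ⟨t, inv'⟩ := step hW hqW hmax inv
      have hW' : UC le (insert q W) := by
        intro a ha b hb
        rcases Finset.mem_insert.1 ha with rfl | haW
        · rcases hmax b hb with rfl | hbW
          · exact Finset.mem_insert_self b W
          · exact Finset.mem_insert_of_mem hbW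
        · exact Finset.mem_insert_of_mem (hW a haW b hb)
      have hcard' : (Finset.univ \ insert q W).card ≤ n := by
        have he : Finset.univ \ insert q W = (Finset.univ \ W).erase q := by
          ext a
          simp only [Finset.mem_sdiff, Finset.mem_erase, Finset.mem_insert, Finset.mem_univ,
            true_and]
          tauto
        rw [he, Finset.card_erase_of_mem hqS]
        omega
      exact ih (insert q W) (Function.update x q t) hW' hcard' inv'

end StepMain

end ValPM

/-- `Val^±(P) = {h : −1 ≤ ∑_{a∈F} h(a) ≤ 1 for all filters F}` equals the Minkowski
difference `Val(P) − Val(P)`. -/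
theorem valPM_eq_valPoly_sub_valPoly
    (P : Type*) [Fintype P] (le : P → P → Prop) (h : IsPartialOrder P le) :
    {h : P → ℝ | ∀ F : Finset P, (∀ a ∈ F, ∀ b, le a b → b ∈ F) →
        -1 ≤ ∑ a ∈ F, h a ∧ ∑ a ∈ F, h a ≤ 1} =
      valPoly P le - valPoly P le := by
  classical
  have htrans : Transitive le := fun {a b c} hab hbc => h.toIsPreorder.toIsTrans.trans a b c hab hbc
  have hanti : AntiSymmetric le := fun {a b} hab hba => h.toAntisymm.antisymm a b hab hba
  ext g
  simp only [Set.mem_setOf_eq]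
  constructor
  · intro hg
    -- initial invariant at `W = ∅`
    have inv0 : ValPM.Inv le g (fun _ => (0 : ℝ)) (∅ : Finset P) := by
      constructor
      · intro G hG hGsub
        have : G = ∅ := Finset.subset_empty.1 hGsub
        subst this
        simp [ValPM.XS, ValPM.HS]
      · intro G G' hG hG' hpart
        rw [Finset.sdiff_empty, Finset.sdiff_empty] at hpart
        subst hpart
        have hXz : ValPM.XS (fun _ => (0 : ℝ)) (∅ : Finset P) G = 0 := by
          simp [ValPM.XS]
        have hHG : ValPM.HS g G = ∑ a ∈ G, g a := rfl
        have := hg G hG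
        rw [hXz, hHG]
        constructor <;> linarith [this.1, this.2]
    have hUCempty : ValPM.UC le (∅ : Finset P) := by
      intro a ha
      exact absurd ha (Finset.notMem_empty a)
    obtain ⟨y, invU⟩ := ValPM.build (h := g) htrans hanti (Finset.univ \ (∅ : Finset P)).card
      ∅ (fun _ => 0) hUCempty le_rfl inv0
    have hy : y ∈ valPoly P le := by
      intro F hF
      have := (invU.1 F hF (Finset.subset_univ F)).1
      rwa [ValPM.XS_univ] at this
    have hy2 : (fun a => y a - g a) ∈ valPoly P le := by
      intro F hF
      have h2 := (invU.1 F hF (Finset.subset_univ F)).2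
      rw [ValPM.XS_univ] at h2
      have hHG : ValPM.HS g F = ∑ a ∈ F, g a := rfl
      rw [hHG] at h2
      rw [Finset.sum_sub_distrib]
      constructor <;> linarith [h2.1, h2.2]
    rw [Set.mem_sub]
    refine ⟨y, hy, (fun a => y a - g a), hy2, ?_⟩
    funext a
    simp only [Pi.sub_apply]
    ring
  · intro hg F hF
    rw [Set.mem_sub] at hg
    obtain ⟨h₁, hh₁, h₂, hh₂, rfl⟩ := hg
    have e1 := hh₁ F hF
    have e2 := hh₂ F hF
    have : ∑ a ∈ F, (h₁ - h₂) a = (∑ a ∈ F, h₁ a) - ∑ a ∈ F, h₂ a := by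
      simp only [Pi.sub_apply]
      exact Finset.sum_sub_distrib _ _
    rw [this]
    constructor <;> linarith [e1.1, e1.2, e2.1, e2.2]
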